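/- Let Q_1, Q_2, Q_3 be the vertices of a (nondegenerate) triangle in the plane, and for each pair (i,j) let h_{ij} be a line perpendicular to Q_iQ_j with Pythagorean coordinate ψ_{ij} = d(P,Q_i)² − d(P,Q_j)² for P ∈ h_{ij}. Then h_{12}, h_{23}, h_{31} are concurrent if and only if ψ_{12} + ψ_{23} + ψ_{31} = 0. In particular, the three perpendicular bisectors of the sides of a triangle are concurrent. -/

import Mathlib

open scoped RealInnerProductSpace

private lemma stmt4_expand (P Q R : EuclideanSpace ℝ (Fin 2)) :
    dist P Q ^ 2 - dist P R ^ 2 = 2 * ⟪R - Q, P⟫ + ‖Q‖ ^ 2 - ‖R‖ ^ 2 := by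
  rw [dist_eq_norm, dist_eq_norm, norm_sub_sq_real, norm_sub_sq_real, inner_sub_left,
    real_inner_comm P Q, real_inner_comm P R]
  ring

private lemma stmt4_surj (Q₁ Q₂ Q₃ : EuclideanSpace ℝ (Fin 2))
    (hQ : AffineIndependent ℝ ![Q₁, Q₂, Q₃]) (a c : ℝ) :
    ∃ P : EuclideanSpace ℝ (Fin 2), ⟪Q₂ - Q₁, P⟫ = a ∧ ⟪Q₃ - Q₁, P⟫ = c := by
  set f : {x : Fin 3 // x ≠ 0} → EuclideanSpace ℝ (Fin 2) :=
    fun i => ![Q₁, Q₂, Q₃] i -ᵥ ![Q₁, Q₂, Q₃] 0 with hf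
  have hli : LinearIndependent ℝ f :=
    (affineIndependent_iff_linearIndependent_vsub ℝ ![Q₁, Q₂, Q₃] 0).mp hQ
  have hspan : Submodule.span ℝ (Set.range f) = ⊤ := by
    apply Submodule.eq_top_of_finrank_eq
    rw [finrank_span_eq_card hli, finrank_euclideanSpace_fin]
    simp [Fintype.card_subtype_compl]
  set L : EuclideanSpace ℝ (Fin 2) →ₗ[ℝ] ℝ × ℝ :=
    ((innerSL ℝ (Q₂ - Q₁)).toLinearMap).prod ((innerSL ℝ (Q₃ - Q₁)).toLinearMap) with hL
  have hinj : Function.Injective L := by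
    rw [← LinearMap.ker_eq_bot, Submodule.eq_bot_iff]
    intro P hP
    simp only [LinearMap.mem_ker, hL, LinearMap.prod_apply, Prod.mk_eq_zero,
      LinearMap.coe_comp, Function.comp_apply, ContinuousLinearMap.coe_coe,
      innerSL_apply_apply, Function.prod] at hP
    have hmem : Submodule.span ℝ (Set.range f) ≤ (ℝ ∙ P)ᗮ := by
      rw [Submodule.span_le]
      rintro w ⟨⟨i, hi⟩, rfl⟩
      rw [SetLike.mem_coe, Submodule.mem_orthogonal_singleton_iff_inner_right]
      rw [real_inner_comm]
      fin_cases i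
      · exact absurd rfl hi
      · simpa [hf] using hP.1
      · simpa [hf] using hP.2
    rw [hspan, top_le_iff] at hmem
    have : P ∈ (ℝ ∙ P)ᗮ := hmem ▸ Submodule.mem_top
    exact inner_self_eq_zero.mp (Submodule.mem_orthogonal_singleton_iff_inner_right.mp this)
  have hsurj : Function.Surjective L := by
    rw [← LinearMap.injective_iff_surjective_of_finrank_eq_finrank (by simp)]
    exact hinj
  obtain ⟨P, hP⟩ := hsurj (a, c)
  refine ⟨P, ?_, ?_⟩
  · have := congrArg Prod.fst hP
    simp only [hL, LinearMap.prod_apply, Function.prod, ContinuousLinearMap.coe_coe,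
      innerSL_apply_apply] at this
    exact this
  · have := congrArg Prod.snd hP
    simp only [hL, LinearMap.prod_apply, Function.prod, ContinuousLinearMap.coe_coe,
      innerSL_apply_apply] at this
    exact this

theorem stmt_4 (Q₁ Q₂ Q₃ : EuclideanSpace ℝ (Fin 2))
    (hQ : AffineIndependent ℝ ![Q₁, Q₂, Q₃]) (ψ₁₂ ψ₂₃ ψ₃₁ : ℝ) :
    (({P : EuclideanSpace ℝ (Fin 2) | dist P Q₁ ^ 2 - dist P Q₂ ^ 2 = ψ₁₂} ∩
      {P | dist P Q₂ ^ 2 - dist P Q₃ ^ 2 = ψ₂₃} ∩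
      {P | dist P Q₃ ^ 2 - dist P Q₁ ^ 2 = ψ₃₁}).Nonempty ↔ ψ₁₂ + ψ₂₃ + ψ₃₁ = 0) ∧
    ({P : EuclideanSpace ℝ (Fin 2) | dist P Q₁ = dist P Q₂} ∩
      {P | dist P Q₂ = dist P Q₃} ∩ {P | dist P Q₃ = dist P Q₁}).Nonempty := by
  have main : ∀ a b c : ℝ, a + b + c = 0 →
      (({P : EuclideanSpace ℝ (Fin 2) | dist P Q₁ ^ 2 - dist P Q₂ ^ 2 = a} ∩
        {P | dist P Q₂ ^ 2 - dist P Q₃ ^ 2 = b} ∩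
        {P | dist P Q₃ ^ 2 - dist P Q₁ ^ 2 = c}).Nonempty) := by
    intro a b c habc
    obtain ⟨P, hP1, hP2⟩ := stmt4_surj Q₁ Q₂ Q₃ hQ
      ((a - ‖Q₁‖ ^ 2 + ‖Q₂‖ ^ 2) / 2)
      ((a + b - ‖Q₁‖ ^ 2 + ‖Q₃‖ ^ 2) / 2)
    have h3 : ⟪Q₃ - Q₂, P⟫ = (b - ‖Q₂‖ ^ 2 + ‖Q₃‖ ^ 2) / 2 := by
      have : Q₃ - Q₂ = (Q₃ - Q₁) - (Q₂ - Q₁) := by abel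
      rw [this, inner_sub_left, hP1, hP2]; ring
    have h1' : ⟪Q₁ - Q₃, P⟫ = (c - ‖Q₃‖ ^ 2 + ‖Q₁‖ ^ 2) / 2 := by
      have : Q₁ - Q₃ = -(Q₃ - Q₁) := by abel
      rw [this, inner_neg_left, hP2]
      linarith
    exact ⟨P, ⟨by simp only [Set.mem_setOf_eq]; rw [stmt4_expand, hP1]; ring,
      by simp only [Set.mem_setOf_eq]; rw [stmt4_expand, h3]; ring⟩,
      by simp only [Set.mem_setOf_eq]; rw [stmt4_expand, h1']; ring⟩
  constructor
  · constructor
    · rintro ⟨P, ⟨h1, h2⟩, h3⟩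
      simp only [Set.mem_setOf_eq] at h1 h2 h3
      rw [← h1, ← h2, ← h3]; ring
    · exact main ψ₁₂ ψ₂₃ ψ₃₁
  · obtain ⟨P, ⟨h1, h2⟩, h3⟩ := main 0 0 0 (by ring)
    simp only [Set.mem_setOf_eq, sub_eq_zero] at h1 h2 h3
    exact ⟨P, ⟨(sq_eq_sq₀ dist_nonneg dist_nonneg).mp h1,
      (sq_eq_sq₀ dist_nonneg dist_nonneg).mp h2⟩,
      (sq_eq_sq₀ dist_nonneg dist_nonneg).mp h3⟩
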